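/- arXiv:2210.11418 — 5 statements merged into one kernel-verified Lean document; each statement's English description precedes it below -/
import Mathlib

section
/- Let (P, <) be a partially ordered set in which every antichain has cardinality at most d, and let n, N be natural numbers with N > 2·n·d. Suppose h, k : Fin N → P are functions such that for all indices i < j: h i ≠ h j and ¬(h i < h j), and also k i ≠ k j and ¬(k i < k j). Then there exist an index m and indices i₁ < i₂ < ... < iₙ < m and m < j₁ < j₂ < ... < jₙ such that h i₁ > h i₂ > ... > h iₙ > h m and k m > k j₁ > k j₂ > ... > k jₙ. -/
open Finset

section Aux

variable {P : Type*} [PartialOrder P] {N : ℕ}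

/-- Chain predicate: a strictly decreasing `h`-chain of length `t` before `m`, above `h m`. -/
private def GChain (h : Fin N → P) (m : Fin N) (t : ℕ) : Prop :=
  ∃ ii : Fin t → Fin N, StrictMono ii ∧ (∀ a, ii a < m) ∧
    (∀ a b, a < b → h (ii b) < h (ii a)) ∧ (∀ a, h m < h (ii a))

private lemma gchain_zero (h : Fin N → P) (m : Fin N) : GChain h m 0 :=
  ⟨fun a => a.elim0, fun a => a.elim0, fun a => a.elim0, fun a => a.elim0, fun a => a.elim0⟩

private lemma gchain_mono {h : Fin N → P} {m : Fin N} {s t : ℕ} (hst : s ≤ t)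
    (hc : GChain h m t) : GChain h m s := by
  obtain ⟨ii, h1, h2, h3, h4⟩ := hc
  exact ⟨ii ∘ Fin.castLE hst,
    fun a b hab => h1 (show (Fin.castLE hst a) < Fin.castLE hst b from hab),
    fun a => h2 _, fun a b hab => h3 _ _ hab, fun a => h4 _⟩

private lemma gchain_le {h : Fin N → P} {m : Fin N} {t : ℕ} (hc : GChain h m t) : t ≤ N := by
  obtain ⟨ii, h1, -, -, -⟩ := hc
  simpa using Fintype.card_le_of_injective ii h1.injective

private lemma gchain_extend {h : Fin N → P} {m₁ m₂ : Fin N} (hm : m₁ < m₂)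
    (hval : h m₂ < h m₁) {t : ℕ} (hc : GChain h m₁ t) : GChain h m₂ (t + 1) := by
  obtain ⟨ii, h1, h2, h3, h4⟩ := hc
  have key : ∀ a : Fin (t + 1), a ≠ Fin.last t → ∃ a' : Fin t, a = a'.castSucc := by
    intro a ha
    exact ⟨a.castPred ha, (Fin.castSucc_castPred a ha).symm⟩
  refine ⟨Fin.snoc ii m₁, ?_, ?_, ?_, ?_⟩
  · intro a b hab
    have ha : a ≠ Fin.last t := Fin.ne_last_of_lt hab
    obtain ⟨a', rfl⟩ := key a ha
    by_cases hb : b = Fin.last t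
    · subst hb
      rw [Fin.snoc_last, Fin.snoc_castSucc]
      exact h2 a'
    · obtain ⟨b', rfl⟩ := key b hb
      rw [Fin.snoc_castSucc, Fin.snoc_castSucc]
      exact h1 (by exact_mod_cast hab)
  · intro a
    by_cases hb : a = Fin.last t
    · subst hb; rw [Fin.snoc_last]; exact hm
    · obtain ⟨a', rfl⟩ := key a hb
      rw [Fin.snoc_castSucc]
      exact lt_trans (h2 a') hm
  · intro a b hab
    have ha : a ≠ Fin.last t := Fin.ne_last_of_lt hab
    obtain ⟨a', rfl⟩ := key a ha
    by_cases hb : b = Fin.last t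
    · subst hb
      rw [Fin.snoc_last, Fin.snoc_castSucc]
      exact h4 a'
    · obtain ⟨b', rfl⟩ := key b hb
      rw [Fin.snoc_castSucc, Fin.snoc_castSucc]
      exact h3 a' b' (by exact_mod_cast hab)
  · intro a
    by_cases hb : a = Fin.last t
    · subst hb; rw [Fin.snoc_last]; exact hval
    · obtain ⟨a', rfl⟩ := key a hb
      rw [Fin.snoc_castSucc]
      exact lt_trans hval (h4 a')

open Classical in
/-- Counting lemma: at most `n * d` indices fail to have a chain of length `n`. -/
private lemma gchain_count (d n : ℕ)
    (hd : ∀ A : Finset P, IsAntichain (· ≤ ·) (A : Set P) → A.card ≤ d)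
    (h : Fin N → P) (hh : ∀ i j : Fin N, i < j → h i ≠ h j ∧ ¬ h i < h j) :
    (univ.filter (fun m => ¬ GChain h m n)).card ≤ n * d := by
  classical
  set f : Fin N → ℕ := fun m => Nat.findGreatest (GChain h m) N with hf
  have hCf : ∀ m, GChain h m (f m) := by
    intro m
    rcases Nat.eq_zero_or_pos (f m) with h0 | h0
    · rw [h0]; exact gchain_zero h m
    · exact Nat.findGreatest_of_ne_zero rfl h0.ne'
  have key : ∀ m₁ m₂ : Fin N, m₁ < m₂ → f m₁ = f m₂ → ¬ h m₂ < h m₁ := by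
    intro m₁ m₂ hm hfm hval
    have hc : GChain h m₂ (f m₁ + 1) := gchain_extend hm hval (hCf m₁)
    have : f m₁ + 1 ≤ f m₂ := Nat.le_findGreatest (gchain_le hc) hc
    omega
  -- fibers of f are antichains (as h-images)
  have fiber_card : ∀ v : ℕ, (univ.filter (fun m => f m = v)).card ≤ d := by
    intro v
    set S := univ.filter (fun m : Fin N => f m = v) with hS
    have hinj : Set.InjOn h S := by
      intro m₁ hm₁ m₂ hm₂ heq
      by_contra hne
      rcases lt_or_gt_of_ne hne with hlt | hlt
      · exact (hh m₁ m₂ hlt).1 heq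
      · exact (hh m₂ m₁ hlt).1 heq.symm
    have hcard : S.card = (S.image h).card := (Finset.card_image_of_injOn hinj).symm
    rw [hcard]
    apply hd
    intro x hx y hy hxy hle
    simp only [coe_image, Set.mem_image, mem_coe] at hx hy
    obtain ⟨m₁, hm₁, rfl⟩ := hx
    obtain ⟨m₂, hm₂, rfl⟩ := hy
    simp only [hS, mem_filter] at hm₁ hm₂
    have hne : m₁ ≠ m₂ := fun e => hxy (by rw [e])
    have hlt : h m₁ < h m₂ := lt_of_le_of_ne hle hxy
    rcases lt_or_gt_of_ne hne with hmm | hmm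
    · exact (hh m₁ m₂ hmm).2 hlt
    · exact key m₂ m₁ hmm (hm₂.2.trans hm₁.2.symm) hlt
  have hsub : (univ.filter (fun m => ¬ GChain h m n)) ⊆
      (Finset.range n).biUnion (fun v => univ.filter (fun m => f m = v)) := by
    intro m hm
    simp only [mem_filter, mem_univ, true_and] at hm
    have hfm : f m < n := by
      by_contra hge
      exact hm (gchain_mono (le_of_not_gt hge) (hCf m))
    simp only [mem_biUnion, Finset.mem_range]
    exact ⟨f m, hfm, by simp⟩
  calc (univ.filter (fun m => ¬ GChain h m n)).card
      ≤ ((Finset.range n).biUnion (fun v => univ.filter (fun m => f m = v))).card :=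
        Finset.card_le_card hsub
    _ ≤ ∑ v ∈ Finset.range n, (univ.filter (fun m => f m = v)).card :=
        Finset.card_biUnion_le
    _ ≤ ∑ _v ∈ Finset.range n, d := Finset.sum_le_sum fun v _ => fiber_card v
    _ = n * d := by simp [mul_comm]

end Aux

/-- In a poset with antichains of size at most `d`, given two sequences of length
`N > 2·n·d` never strictly increasing (in the sense of a geodesic's halfspace sequence),
one finds a middle index `m` with a descending chain of length `n` of `h`-values before it
ending above `h m`, and a descending chain of length `n` of `k`-values after it
starting below `k m`. -/
theorem poset_grid_lemma {P : Type*} [PartialOrder P] (d n N : ℕ)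
    (hd : ∀ A : Finset P, IsAntichain (· ≤ ·) (A : Set P) → A.card ≤ d)
    (hN : 2 * n * d < N)
    (h k : Fin N → P)
    (hh : ∀ i j : Fin N, i < j → h i ≠ h j ∧ ¬ h i < h j)
    (hk : ∀ i j : Fin N, i < j → k i ≠ k j ∧ ¬ k i < k j) :
    ∃ m : Fin N, ∃ ii jj : Fin n → Fin N,
      StrictMono ii ∧ StrictMono jj ∧
      (∀ a, ii a < m) ∧ (∀ a, m < jj a) ∧
      (∀ a b, a < b → h (ii b) < h (ii a)) ∧ (∀ a, h m < h (ii a)) ∧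
      (∀ a b, a < b → k (jj b) < k (jj a)) ∧ (∀ a, k (jj a) < k m) := by
  classical
  have hN0 : 0 < N := lt_of_le_of_lt (Nat.zero_le _) hN
  -- dual sequence for k
  set k' : Fin N → Pᵒᵈ := fun i => OrderDual.toDual (k i.rev) with hk'
  have hd' : ∀ A : Finset Pᵒᵈ, IsAntichain (· ≤ ·) (A : Set Pᵒᵈ) → A.card ≤ d := by
    intro A hA
    have : IsAntichain (· ≤ ·) ((A.image OrderDual.ofDual : Finset P) : Set P) := by
      intro x hx y hy hxy hle
      simp only [coe_image, Set.mem_image, mem_coe] at hx hy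
      obtain ⟨x', hx', rfl⟩ := hx
      obtain ⟨y', hy', rfl⟩ := hy
      exact hA hy' hx' (fun e => hxy (by rw [e])) hle
    have := hd _ this
    rwa [Finset.card_image_of_injective _ OrderDual.ofDual.injective] at this
  have hh' : ∀ i j : Fin N, i < j → k' i ≠ k' j ∧ ¬ k' i < k' j := by
    intro i j hij
    have hr : j.rev < i.rev := Fin.rev_lt_rev.mpr hij
    obtain ⟨hne, hnlt⟩ := hk j.rev i.rev hr
    constructor
    · intro e
      exact hne (congrArg OrderDual.ofDual e).symm
    · intro hlt
      exact hnlt hlt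
  have c1 := gchain_count d n hd h hh
  have c2 := gchain_count d n hd' k' hh'
  -- transfer the k'-count to a set over original indices
  set Sg : Finset (Fin N) :=
    (univ.filter (fun m => ¬ GChain k' m n)).image Fin.rev with hSg
  have c2' : Sg.card ≤ n * d := by
    rw [hSg, Finset.card_image_of_injective _ Fin.rev_injective]
    exact c2
  set Sf := univ.filter (fun m : Fin N => ¬ GChain h m n) with hSf
  have hcard : (Sf ∪ Sg).card < N := by
    calc (Sf ∪ Sg).card ≤ Sf.card + Sg.card := Finset.card_union_le _ _
      _ ≤ n * d + n * d := Nat.add_le_add c1 c2'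
      _ = 2 * n * d := by ring
      _ < N := hN
  have : ∃ m : Fin N, m ∉ Sf ∪ Sg := by
    by_contra hall
    push_neg at hall
    have : (univ : Finset (Fin N)) ⊆ Sf ∪ Sg := fun m _ => hall m
    have := Finset.card_le_card this
    simp only [Finset.card_univ, Fintype.card_fin] at this
    omega
  obtain ⟨m, hm⟩ := this
  rw [Finset.mem_union, not_or] at hm
  obtain ⟨hm1, hm2⟩ := hm
  have hC1 : GChain h m n := by
    by_contra hc
    exact hm1 (by simp [hSf, hc])
  have hC2 : GChain k' m.rev n := by
    by_contra hc
    exact hm2 (by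
      simp only [hSg, Finset.mem_image, mem_filter, mem_univ, true_and]
      exact ⟨m.rev, hc, m.rev_rev⟩)
  obtain ⟨ii, hii1, hii2, hii3, hii4⟩ := hC1
  obtain ⟨jj', hjj1, hjj2, hjj3, hjj4⟩ := hC2
  refine ⟨m, ii, fun a => (jj' a.rev).rev, hii1, ?_, hii2, ?_, hii3, hii4, ?_, ?_⟩
  · intro a b hab
    have : a.rev > b.rev := Fin.rev_lt_rev.mpr hab
    have := hjj1 this
    exact Fin.rev_lt_rev.mpr this
  · intro a
    have := hjj2 a.rev
    have := Fin.rev_lt_rev.mpr this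
    rwa [Fin.rev_rev] at this
  · intro a b hab
    have hr : b.rev < a.rev := Fin.rev_lt_rev.mpr hab
    have := hjj3 b.rev a.rev hr
    -- k' x < k' y in dual means k (y.rev) < k (x.rev)
    exact this
  · intro a
    have := hjj4 a.rev
    -- k' m.rev < k' (jj' a.rev) in dual means k ((jj' a.rev).rev) < k (m.rev.rev) = k m
    simpa [hk', Fin.rev_rev] using this
end

section
/- Let Γ be a finite simple graph and v a vertex of Γ. For a vertex w, write St(w) for the closed star {w} ∪ {u : u adjacent to w}. Then a vertex w belongs to every maximal clique of Γ containing v if and only if St(v) ⊆ St(w). -/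
/-- In a finite simple graph, a vertex `w` belongs to every maximal clique containing `v`
if and only if the closed star of `v` is contained in the closed star of `w`. -/
theorem mem_all_maximal_cliques_iff_star_subset {V : Type*} [Fintype V]
    (G : SimpleGraph V) (v w : V) :
    (∀ s : Set V, G.IsClique s → v ∈ s →
        (∀ t : Set V, G.IsClique t → s ⊆ t → s = t) → w ∈ s) ↔
      insert v (G.neighborSet v) ⊆ insert w (G.neighborSet w) := by
  constructor
  · intro h u hu
    -- u = v or u adjacent to v; {v,u} is a clique, extend to maximal
    have hclique : G.IsClique {v, u} := by
      intro a ha b hb hab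
      simp only [Set.mem_insert_iff, Set.mem_singleton_iff] at ha hb
      rcases hu with rfl | hu
      · rcases ha with rfl | rfl <;> rcases hb with rfl | rfl <;> simp_all
      · rw [SimpleGraph.mem_neighborSet] at hu
        rcases ha with rfl | rfl <;> rcases hb with rfl | rfl
        · exact absurd rfl hab
        · exact hu
        · exact hu.symm
        · exact absurd rfl hab
    obtain ⟨s, hle, hmax⟩ := Finite.exists_le_maximal (α := Set V)
      (p := fun t => G.IsClique t) hclique
    have hws : w ∈ s := h s hmax.prop (hle (by simp))
      (fun t ht hst => le_antisymm hst (hmax.le_of_ge ht hst))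
    have hus : u ∈ s := hle (by simp)
    by_cases huw : u = w
    · simp [huw]
    · exact Set.mem_insert_iff.2 (Or.inr ((G.mem_neighborSet w u).2 (hmax.prop hws hus (Ne.symm huw)).symm.symm))
  · intro h s hs hv hmax
    -- every element of s is in St(w), so insert w s is a clique
    have key : ∀ u ∈ s, u ≠ w → G.Adj w u := by
      intro u hu hne
      have : u ∈ insert v (G.neighborSet v) := by
        by_cases huv : u = v
        · simp [huv]
        · exact Set.mem_insert_iff.2 (Or.inr ((G.mem_neighborSet v u).2 (hs hv hu (Ne.symm huv)).symm.symm))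
      rcases h this with rfl | hadj
      · exact absurd rfl hne
      · exact hadj
    have hclique : G.IsClique (insert w s) := by
      intro a ha b hb hab
      rcases ha with rfl | ha
      · rcases hb with rfl | hb
        · exact absurd rfl hab
        · exact key b hb (fun h' => hab h'.symm)
      · rcases hb with rfl | hb
        · exact (key a ha hab).symm
        · exact hs ha hb hab
    have := hmax (insert w s) hclique (Set.subset_insert w s)
    rw [this]; exact Set.mem_insert w s
end

section
/- Let a group G act properly and cocompactly by isometries on a proper metric space X, and let A ⊆ X be a nonempty closed subset. Then the setwise stabilizer G_A = {g ∈ G : gA = A} acts cocompactly on A if and only if the collection of translates {gA : g ∈ G} is locally finite (every ball in X meets only finitely many distinct translates gA). -/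
open Pointwise

/-- For a proper cocompact isometric action `G ↷ X` on a proper metric space and a nonempty
closed subset `A`, the setwise stabilizer of `A` acts cocompactly on `A` if and only if the
family of translates `{gA : g ∈ G}` is locally finite. -/
theorem stabilizer_cocompact_iff_locally_finite {G X : Type*} [Group G]
    [MetricSpace X] [ProperSpace X] [MulAction G X]
    (hiso : ∀ g : G, Isometry (fun x : X => g • x))
    (hproper : ∀ K : Set X, IsCompact K → {g : G | ((g • K) ∩ K).Nonempty}.Finite)
    (hcocpt : ∃ K : Set X, IsCompact K ∧ ⋃ g : G, g • K = Set.univ)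
    (A : Set X) (hne : A.Nonempty) (hcl : IsClosed A) :
    (∃ K : Set X, IsCompact K ∧ ∀ a ∈ A, ∃ g : G, g • A = A ∧ a ∈ g • (K ∩ A)) ↔
      (∀ (x : X) (r : ℝ),
        {B : Set X | (∃ g : G, g • A = B) ∧ (B ∩ Metric.ball x r).Nonempty}.Finite) := by
  have hsmul_compact : ∀ (g : G) (K : Set X), IsCompact K → IsCompact (g • K) := by
    intro g K hK
    have : (fun x : X => g • x) '' K = g • K := Set.image_smul
    rw [← this]
    exact hK.image (hiso g).continuous
  constructor
  · rintro ⟨K, hK, hKA⟩ x r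
    set L : Set X := K ∪ Metric.closedBall x r with hL
    have hLc : IsCompact L := hK.union (isCompact_closedBall x r)
    have hF : {g : G | ((g • L) ∩ L).Nonempty}.Finite := hproper L hLc
    apply Set.Finite.subset (hF.image (fun g => g • A))
    rintro B ⟨⟨g, hgB⟩, b, hbB, hbr⟩
    rw [← hgB] at hbB
    obtain ⟨a, haA, hab⟩ := hbB
    obtain ⟨h, hhA, hak⟩ := hKA a haA
    obtain ⟨k, hkKA, hka⟩ := hak
    refine ⟨g * h, ⟨b, ?_, ?_⟩, ?_⟩
    · refine ⟨k, Or.inl hkKA.1, ?_⟩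
      show (g * h) • k = b
      rw [mul_smul, show h • k = a from hka, show g • a = b from hab]
    · exact Or.inr (Metric.ball_subset_closedBall hbr)
    · show (g * h) • A = B
      rw [mul_smul, hhA, hgB]
  · intro hlf
    obtain ⟨K₀, hK₀c, hK₀u⟩ := hcocpt
    obtain ⟨a₀, ha₀⟩ := hne
    obtain ⟨R₀, hR₀⟩ := hK₀c.isBounded.subset_closedBall a₀
    set R : ℝ := R₀ + 1 with hRdef
    have hK₀ball : K₀ ⊆ Metric.ball a₀ R := fun y hy =>
      lt_of_le_of_lt (Metric.mem_closedBall.mp (hR₀ hy)) (by linarith)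
    set S : Set (Set X) :=
      {B : Set X | (∃ g : G, g • A = B) ∧ (B ∩ Metric.ball a₀ R).Nonempty} with hSdef
    have hS : S.Finite := hlf a₀ R
    classical
    set f : Set X → G := fun B =>
      if h : ∃ g : G, g • A = B then Classical.choose h else 1 with hf
    have hfspec : ∀ B ∈ S, (f B) • A = B := by
      intro B hB
      obtain ⟨hex, -⟩ := hB
      simp only [hf, dif_pos hex]
      exact Classical.choose_spec hex
    refine ⟨⋃ B ∈ S, (f B)⁻¹ • K₀, ?_, ?_⟩
    · exact hS.isCompact_biUnion (fun B _ => hsmul_compact _ _ hK₀c)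
    · intro a haA
      have : a ∈ ⋃ g : G, g • K₀ := hK₀u ▸ Set.mem_univ a
      obtain ⟨g, hg⟩ := Set.mem_iUnion.mp this
      have hgaK : g⁻¹ • a ∈ K₀ := by
        rwa [← Set.mem_smul_set_iff_inv_smul_mem]
      have hBS : (g⁻¹ • A) ∈ S := by
        refine ⟨⟨g⁻¹, rfl⟩, ⟨g⁻¹ • a, ?_, hK₀ball hgaK⟩⟩
        exact Set.smul_mem_smul_set haA
      have hfB : (f (g⁻¹ • A)) • A = g⁻¹ • A := hfspec _ hBS
      set h : G := f (g⁻¹ • A)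
      refine ⟨g * h, ?_, ?_⟩
      · rw [mul_smul, hfB, smul_inv_smul]
      · rw [Set.mem_smul_set_iff_inv_smul_mem]
        constructor
        · refine Set.mem_biUnion hBS ?_
          rw [mul_inv_rev, mul_smul]
          exact Set.smul_mem_smul_set hgaK
        · have : (g * h) • A = A := by rw [mul_smul, hfB, smul_inv_smul]
          have := this ▸ haA
          rwa [Set.mem_smul_set_iff_inv_smul_mem] at this
end

section
/- Let a group G act properly and cocompactly by isometries on a proper metric space X. Let A, B ⊆ X be nonempty closed subsets that are invariant and acted upon cocompactly by subgroups H ≤ G and K ≤ G respectively. Then the intersection H ∩ K acts cocompactly on A ∩ B (this holds vacuously if A ∩ B = ∅). -/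
open Pointwise

/-- Cocompact intersections: if `H` and `K` act cocompactly on invariant closed subsets
`A` and `B` of a space with a proper cocompact `G`-action, then `H ⊓ K` acts cocompactly
on `A ∩ B`. -/
theorem cocompact_intersections {G X : Type*} [Group G]
    [MetricSpace X] [ProperSpace X] [MulAction G X]
    (hiso : ∀ g : G, Isometry (fun x : X => g • x))
    (hproper : ∀ K : Set X, IsCompact K → {g : G | ((g • K) ∩ K).Nonempty}.Finite)
    (hcocpt : ∃ K : Set X, IsCompact K ∧ ⋃ g : G, g • K = Set.univ)
    (A B : Set X) (hAne : A.Nonempty) (hBne : B.Nonempty)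
    (hAcl : IsClosed A) (hBcl : IsClosed B)
    (H K : Subgroup G)
    (hHA : ∀ h ∈ H, h • A = A) (hKB : ∀ k ∈ K, k • B = B)
    (hHcc : ∃ C : Set X, IsCompact C ∧ ∀ a ∈ A, ∃ h ∈ H, a ∈ h • C)
    (hKcc : ∃ C : Set X, IsCompact C ∧ ∀ b ∈ B, ∃ k ∈ K, b ∈ k • C) :
    ∃ C : Set X, IsCompact C ∧ ∀ x ∈ A ∩ B, ∃ g ∈ H ⊓ K, x ∈ g • C := by
  classical
  obtain ⟨CA, hCAc, hA⟩ := hHcc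
  obtain ⟨CB, hCBc, hB⟩ := hKcc
  set D : Set X := CA ∪ CB with hD
  have hDc : IsCompact D := hCAc.union hCBc
  have hF : {g : G | ((g • D) ∩ D).Nonempty}.Finite := hproper D hDc
  set P : G → Prop := fun f => ∃ h : H, ∃ k : K, (h : G)⁻¹ * k = f with hPdef
  set S : G → Set X := fun f => if hf : P f then (hf.choose : G) • CA else ∅ with hSdef
  refine ⟨⋃ f ∈ {g : G | ((g • D) ∩ D).Nonempty}, S f, ?_, ?_⟩
  · apply hF.isCompact_biUnion
    intro f _
    by_cases hf : P f
    · simp only [hSdef, dif_pos hf]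
      have := hCAc.image (hiso (hf.choose : G)).continuous
      rwa [Set.image_smul] at this
    · simp [hSdef, dif_neg hf]
  · rintro x ⟨hxA, hxB⟩
    obtain ⟨h, hH, hx⟩ := hA x hxA
    obtain ⟨k, hK, hxk⟩ := hB x hxB
    set f : G := h⁻¹ * k with hfdef
    have hxCA : h⁻¹ • x ∈ CA := by
      rwa [Set.mem_smul_set_iff_inv_smul_mem] at hx
    have hxCB : k⁻¹ • x ∈ CB := by
      rwa [Set.mem_smul_set_iff_inv_smul_mem] at hxk
    have hfF : f ∈ {g : G | ((g • D) ∩ D).Nonempty} := by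
      refine ⟨h⁻¹ • x, ?_, Set.mem_union_left _ hxCA⟩
      rw [Set.mem_smul_set_iff_inv_smul_mem]
      have : f⁻¹ • h⁻¹ • x = k⁻¹ • x := by
        rw [smul_smul, hfdef]; congr 1; group
      rw [this]
      exact Set.mem_union_right _ hxCB
    have hPf : P f := ⟨⟨h, hH⟩, ⟨k, hK⟩, rfl⟩
    obtain ⟨k', hk'eq⟩ := hPf.choose_spec
    set h' : G := (hPf.choose : G) with hh'def
    -- hk'eq : h'⁻¹ * k' = f = h⁻¹ * k
    have hk'val : (k' : G) = h' * (h⁻¹ * k) := by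
      rw [← hfdef, ← hk'eq]; group
    have hg : h * h'⁻¹ = k * (k' : G)⁻¹ := by rw [hk'val]; group
    refine ⟨h * h'⁻¹, ?_, ?_⟩
    · rw [Subgroup.mem_inf]
      constructor
      · exact mul_mem hH (inv_mem hPf.choose.2)
      · rw [hg]; exact mul_mem hK (inv_mem k'.2)
    · have hsub : S f ⊆ ⋃ g ∈ {g : G | ((g • D) ∩ D).Nonempty}, S g :=
        Set.subset_biUnion_of_mem hfF
      apply Set.smul_set_mono hsub
      have hSf : S f = h' • CA := by rw [hSdef]; simp only [dif_pos hPf]; rfl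
      rw [hSf, smul_smul, inv_mul_cancel_right]
      exact hx
end

section
/- Let n = 3 or n ≥ 5, and let the symmetric group S_n act on ℤⁿ by permuting coordinates, inducing an action on the set of subgroups of ℤⁿ. Then for every maximal infinite cyclic subgroup C ≤ ℤⁿ with C ≠ ⟨(1,1,…,1)⟩, the S_n-orbit of C contains at least n distinct subgroups. -/
/-- The action of a permutation `σ` of coordinates on `ℤⁿ`, as an additive homomorphism. -/
def permAddHom (n : ℕ) (σ : Equiv.Perm (Fin n)) : (Fin n → ℤ) →+ (Fin n → ℤ) where
  toFun v := v ∘ σ.symm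
  map_zero' := rfl
  map_add' _ _ := rfl

namespace OrbitAux

/-- If two `zmultiples` agree (with nonzero generator), generators agree up to sign. -/
lemma gen_eq_of_zmultiples_eq {n : ℕ} {u w : Fin n → ℤ} (hu : u ≠ 0)
    (h : AddSubgroup.zmultiples u = AddSubgroup.zmultiples w) : w = u ∨ w = -u := by
  have h1 : u ∈ AddSubgroup.zmultiples w := h ▸ AddSubgroup.mem_zmultiples u
  have h2 : w ∈ AddSubgroup.zmultiples u := h ▸ AddSubgroup.mem_zmultiples w
  obtain ⟨a, ha⟩ := AddSubgroup.mem_zmultiples_iff.mp h1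
  obtain ⟨b, hb⟩ := AddSubgroup.mem_zmultiples_iff.mp h2
  obtain ⟨j, hj⟩ : ∃ j, u j ≠ 0 := Function.ne_iff.mp hu
  have hab : a * b = 1 := by
    have h3 : a • (b • u) = u := by rw [hb, ha]
    have h4 := congrFun h3 j
    simp only [Pi.smul_apply, smul_eq_mul] at h4
    have h5 : (a * b) * u j = 1 * u j := by rw [mul_assoc, h4, one_mul]
    exact mul_right_cancel₀ hj h5
  rcases Int.eq_one_or_neg_one_of_mul_eq_one' hab with ⟨_, hb1⟩ | ⟨_, hb1⟩
  · left; rw [← hb, hb1, one_smul]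
  · right; rw [← hb, hb1, neg_smul, one_smul]

variable {n : ℕ} (S : Finset (Fin n)) (a b : Fin n)

/-- A family of permutations. -/
def famPerm (m : Fin n) : Equiv.Perm (Fin n) :=
  if m = a then 1 else if m ∈ S then Equiv.swap m b else Equiv.swap a m

/-- The image of `S` under `famPerm`. -/
def famSet (m : Fin n) : Finset (Fin n) :=
  if m = a then S else if m ∈ S then insert b (S.erase m) else insert m (S.erase a)

variable (ha : a ∈ S) (hb : b ∉ S)
include ha hb

lemma mem_famSet (m j : Fin n) :
    j ∈ famSet S a b m ↔ (famPerm S a b m).symm j ∈ S := by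
  have hab : a ≠ b := fun h => hb (h ▸ ha)
  unfold famSet famPerm
  split_ifs with h1 h2
  · exact Iff.rfl
  · have hmb : m ≠ b := fun h => hb (h ▸ h2)
    rw [Equiv.symm_swap]
    by_cases hjb : j = b
    · subst hjb; simp [Equiv.swap_apply_right, h2, hmb]
    · by_cases hjm : j = m
      · subst hjm; simp [Equiv.swap_apply_left, hb, hjb, Finset.mem_erase]
      · rw [Equiv.swap_apply_of_ne_of_ne hjm hjb]
        simp [Finset.mem_insert, Finset.mem_erase, hjm, hjb]
  · have ham : a ≠ m := fun h => h1 h.symm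
    rw [Equiv.symm_swap]
    by_cases hja : j = a
    · subst hja; simp [Equiv.swap_apply_left, h2, Finset.mem_insert, Finset.mem_erase, ham]
    · by_cases hjm : j = m
      · subst hjm; simp [Equiv.swap_apply_right, ha]
      · rw [Equiv.swap_apply_of_ne_of_ne hja hjm]
        simp [Finset.mem_insert, Finset.mem_erase, hja, hjm]

lemma card_famSet (m : Fin n) : (famSet S a b m).card = S.card := by
  have hpos : 0 < S.card := Finset.card_pos.mpr ⟨a, ha⟩
  unfold famSet
  split_ifs with h1 h2
  · rfl
  · rw [Finset.card_insert_of_notMem (fun h => hb (Finset.mem_of_mem_erase h)),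
      Finset.card_erase_of_mem h2]
    omega
  · rw [Finset.card_insert_of_notMem (fun h => h2 (Finset.mem_of_mem_erase h)),
      Finset.card_erase_of_mem ha]
    omega

lemma famSet_injective {m m' : Fin n} (h : famSet S a b m = famSet S a b m') : m = m' := by
  unfold famSet at h
  by_cases h1 : m = a <;> by_cases h2 : m' = a
  · exact h1.trans h2.symm
  · rw [if_pos h1, if_neg h2] at h
    exfalso
    by_cases h3 : m' ∈ S
    · rw [if_pos h3] at h
      exact hb (by rw [h]; exact Finset.mem_insert_self _ _)
    · rw [if_neg h3] at h
      have haa : a ∈ insert m' (S.erase a) := by rw [← h]; exact ha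
      rcases Finset.mem_insert.mp haa with h' | h'
      · exact h3 (h' ▸ ha)
      · exact absurd rfl (Finset.mem_erase.mp h').1
  · rw [if_neg h1, if_pos h2] at h
    exfalso
    by_cases h3 : m ∈ S
    · rw [if_pos h3] at h
      exact hb (by rw [← h]; exact Finset.mem_insert_self _ _)
    · rw [if_neg h3] at h
      have haa : a ∈ insert m (S.erase a) := by rw [h]; exact ha
      rcases Finset.mem_insert.mp haa with h' | h'
      · exact h3 (h' ▸ ha)
      · exact absurd rfl (Finset.mem_erase.mp h').1
  · rw [if_neg h1, if_neg h2] at h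
    by_cases h3 : m ∈ S <;> by_cases h4 : m' ∈ S
    · rw [if_pos h3, if_pos h4] at h
      by_contra hne
      have hm : m ∈ insert b (S.erase m) := by
        rw [h]; exact Finset.mem_insert.mpr (Or.inr (Finset.mem_erase.mpr ⟨hne, h3⟩))
      rcases Finset.mem_insert.mp hm with h' | h'
      · exact hb (h' ▸ h3)
      · exact absurd rfl (Finset.mem_erase.mp h').1
    · rw [if_pos h3, if_neg h4] at h
      exfalso
      have haa : a ∈ insert b (S.erase m) :=
        Finset.mem_insert.mpr (Or.inr (Finset.mem_erase.mpr ⟨fun hh => h1 hh.symm, ha⟩))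
      rw [h] at haa
      rcases Finset.mem_insert.mp haa with h' | h'
      · exact h4 (h' ▸ ha)
      · exact absurd rfl (Finset.mem_erase.mp h').1
    · rw [if_neg h3, if_pos h4] at h
      exfalso
      have haa : a ∈ insert b (S.erase m') :=
        Finset.mem_insert.mpr (Or.inr (Finset.mem_erase.mpr ⟨fun hh => h2 hh.symm, ha⟩))
      rw [← h] at haa
      rcases Finset.mem_insert.mp haa with h' | h'
      · exact h3 (h' ▸ ha)
      · exact absurd rfl (Finset.mem_erase.mp h').1
    · rw [if_neg h3, if_neg h4] at h
      have hm : m ∈ insert m' (S.erase a) := by rw [← h]; exact Finset.mem_insert_self _ _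
      rcases Finset.mem_insert.mp hm with h' | h'
      · exact h'
      · exact absurd (Finset.mem_of_mem_erase h') h3

lemma mem_famSet_of (m x : Fin n) (hxS : x ∈ S) (hxa : x ≠ a) (hxm : x ≠ m) :
    x ∈ famSet S a b m := by
  unfold famSet
  split_ifs with h1 h2
  · exact hxS
  · exact Finset.mem_insert.mpr (Or.inr (Finset.mem_erase.mpr ⟨hxm, hxS⟩))
  · exact Finset.mem_insert.mpr (Or.inr (Finset.mem_erase.mpr ⟨hxa, hxS⟩))

lemma famSet_inter (hk : 3 ≤ S.card) (m m' : Fin n) :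
    ∃ x, x ∈ famSet S a b m ∧ x ∈ famSet S a b m' := by
  have herase2 : ∀ y z : Fin n, ∃ x, x ∈ S ∧ x ≠ y ∧ x ≠ z := by
    intro y z
    have hc : 1 ≤ ((S.erase y).erase z).card := by
      have h1 := Finset.pred_card_le_card_erase (s := S.erase y) (a := z)
      have h2 := Finset.pred_card_le_card_erase (s := S) (a := y)
      omega
    obtain ⟨x, hx⟩ := Finset.card_pos.mp hc
    rw [Finset.mem_erase, Finset.mem_erase] at hx
    exact ⟨x, hx.2.2, hx.2.1, hx.1⟩
  have hbmem : ∀ m : Fin n, m ∈ S → m ≠ a → b ∈ famSet S a b m := by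
    intro m hmS hma
    unfold famSet
    rw [if_neg hma, if_pos hmS]
    exact Finset.mem_insert_self _ _
  by_cases hBm : m ∈ S ∧ m ≠ a
  · by_cases hBm' : m' ∈ S ∧ m' ≠ a
    · exact ⟨b, hbmem m hBm.1 hBm.2, hbmem m' hBm'.1 hBm'.2⟩
    · obtain ⟨x, hxS, hxa, hxm⟩ := herase2 a m
      have hxm' : x ≠ m' := by
        rcases not_and_or.mp hBm' with h' | h'
        · exact fun hh => h' (hh ▸ hxS)
        · exact fun hh => (not_not.mp h') ▸ hxa <| hh ▸ rfl
      exact ⟨x, mem_famSet_of S a b ha hb m x hxS hxa hxm,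
        mem_famSet_of S a b ha hb m' x hxS hxa hxm'⟩
  · obtain ⟨x, hxS, hxa, hxm'⟩ := herase2 a m'
    have hxm : x ≠ m := by
      rcases not_and_or.mp hBm with h' | h'
      · exact fun hh => h' (hh ▸ hxS)
      · exact fun hh => (not_not.mp h') ▸ hxa <| hh ▸ rfl
    exact ⟨x, mem_famSet_of S a b ha hb m x hxS hxa hxm,
      mem_famSet_of S a b ha hb m' x hxS hxa hxm'⟩

end OrbitAux

open OrbitAux in
/-- For `n = 3` or `n ≥ 5`, the `Sₙ`-orbit of any maximal infinite cyclic subgroup of `ℤⁿ`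
other than `⟨(1,…,1)⟩` contains at least `n` distinct subgroups. -/
theorem orbit_of_maximal_cyclic_large (n : ℕ) (hn : n = 3 ∨ 5 ≤ n)
    (C : AddSubgroup (Fin n → ℤ))
    (hcyc : ∃ v : Fin n → ℤ, v ≠ 0 ∧ C = AddSubgroup.zmultiples v)
    (hmax : ∀ D : AddSubgroup (Fin n → ℤ),
      (∃ w : Fin n → ℤ, w ≠ 0 ∧ D = AddSubgroup.zmultiples w) → C ≤ D → C = D)
    (hne : C ≠ AddSubgroup.zmultiples (fun _ : Fin n => (1 : ℤ))) :
    n ≤ {D : AddSubgroup (Fin n → ℤ) |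
      ∃ σ : Equiv.Perm (Fin n), D = AddSubgroup.map (permAddHom n σ) C}.ncard := by
  classical
  obtain ⟨v, hv0, hC⟩ := hcyc
  set O : Set (AddSubgroup (Fin n → ℤ)) :=
    {D | ∃ σ : Equiv.Perm (Fin n), D = AddSubgroup.map (permAddHom n σ) C} with hO
  have hfin : O.Finite := by
    apply (Set.finite_range (fun σ : Equiv.Perm (Fin n) => AddSubgroup.map (permAddHom n σ) C)).subset
    rintro D ⟨σ, hσ⟩
    exact ⟨σ, hσ.symm⟩
  have hmap : ∀ σ : Equiv.Perm (Fin n),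
      AddSubgroup.map (permAddHom n σ) C = AddSubgroup.zmultiples (v ∘ σ.symm) := by
    intro σ
    rw [hC]
    exact AddMonoidHom.map_zmultiples _ v
  have hcomp_ne : ∀ σ : Equiv.Perm (Fin n), (v ∘ σ.symm) ≠ 0 := by
    intro σ hzero
    apply hv0
    funext j
    have := congrFun hzero (σ j)
    simpa using this
  suffices h : ∃ f : Fin n → AddSubgroup (Fin n → ℤ), Function.Injective f ∧ ∀ m, f m ∈ O by
    obtain ⟨f, hfi, hfm⟩ := h
    calc n = (Finset.univ.image f).card := by
          rw [Finset.card_image_of_injective _ hfi, Finset.card_univ, Fintype.card_fin]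
      _ = ((Finset.univ.image f : Finset _) : Set _).ncard := (Set.ncard_coe_finset _).symm
      _ ≤ O.ncard := by
          have hsub : ((Finset.univ.image f : Finset _) : Set _) ⊆ O := by
            intro D hD
            simp only [Finset.coe_image, Set.mem_image, Finset.mem_coe] at hD
            obtain ⟨m, _, rfl⟩ := hD
            exact hfm m
          have hres := Set.ncard_le_ncard hsub hfin
          exact hres
  by_cases habs : ∀ i j, |v i| = |v j|
  · -- all absolute values are equal; v has entries ±1
    obtain ⟨i₀, hi₀⟩ : ∃ i₀, v i₀ ≠ 0 := Function.ne_iff.mp hv0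
    have hvne : ∀ j, v j ≠ 0 := by
      intro j hj
      apply hi₀
      have := habs i₀ j
      rw [hj, abs_zero, abs_eq_zero] at this
      exact this
    set w : Fin n → ℤ := fun j => if 0 < v j then 1 else -1 with hw
    have hvw : v = |v i₀| • w := by
      funext j
      simp only [Pi.smul_apply, smul_eq_mul, hw]
      rw [← habs j i₀]
      split_ifs with hpos
      · rw [mul_one, abs_of_pos hpos]
      · have : v j < 0 := lt_of_le_of_ne (not_lt.mp hpos) (hvne j)
        rw [abs_of_neg this]; ring
    have hw0 : w ≠ 0 := by
      apply Function.ne_iff.mpr ⟨i₀, ?_⟩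
      simp only [hw, Pi.zero_apply]
      split_ifs <;> norm_num
    have hCw : C = AddSubgroup.zmultiples w := by
      apply hmax _ ⟨w, hw0, rfl⟩
      rw [hC]
      apply AddSubgroup.zmultiples_le_of_mem
      exact ⟨|v i₀|, hvw.symm⟩
    have hpm : ∀ j, v j = 1 ∨ v j = -1 := by
      have := gen_eq_of_zmultiples_eq hv0 (hC ▸ hCw)
      intro j
      rcases this with h' | h'
      · have := congrFun h' j
        simp only [hw] at this
        split_ifs at this <;> simp [← this]
      · have := congrFun h' j
        simp only [hw, Pi.neg_apply] at this
        split_ifs at this <;> [right; left] <;> omega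
    set S : Finset (Fin n) := Finset.univ.filter (fun j => v j = 1) with hS
    have hmemS : ∀ j, j ∈ S ↔ v j = 1 := by
      intro j; simp [hS]
    obtain ⟨a, haS⟩ : S.Nonempty := by
      rw [Finset.nonempty_iff_ne_empty]
      intro hemp
      apply hne
      rw [hC]
      have : v = -(fun _ : Fin n => (1 : ℤ)) := by
        funext j
        have hj : j ∉ S := by rw [hemp]; exact Finset.notMem_empty j
        rcases hpm j with h' | h'
        · exact absurd ((hmemS j).mpr h') hj
        · simpa using h'
      rw [this, AddSubgroup.zmultiples_neg]
    obtain ⟨b, hbS⟩ : ∃ b, b ∉ S := by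
      by_contra hall
      push_neg at hall
      apply hne
      rw [hC]
      have : v = (fun _ : Fin n => (1 : ℤ)) := by
        funext j
        exact (hmemS j).mp (hall j)
      rw [this]
    refine ⟨fun m => AddSubgroup.map (permAddHom n (famPerm S a b m)) C, ?_, fun m => ⟨_, rfl⟩⟩
    intro m m' hmm
    simp only [hmap] at hmm
    rcases gen_eq_of_zmultiples_eq (hcomp_ne _) hmm with h' | h'
    · -- same sign: the famSets coincide
      apply famSet_injective S a b haS hbS
      ext j
      rw [mem_famSet S a b haS hbS, mem_famSet S a b haS hbS, hmemS, hmemS]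
      have := congrFun h' j
      simp only [Function.comp_apply] at this
      rw [this]
    · -- opposite sign: famSet m = complement of famSet m', contradiction
      exfalso
      have hcompl : ∀ j, j ∈ famSet S a b m ↔ j ∉ famSet S a b m' := by
        intro j
        rw [mem_famSet S a b haS hbS, mem_famSet S a b haS hbS, hmemS, hmemS]
        have := congrFun h' j
        simp only [Function.comp_apply, Pi.neg_apply] at this
        rcases hpm ((famPerm S a b m).symm j) with h1 | h1 <;>
          rcases hpm ((famPerm S a b m').symm j) with h2 | h2 <;>
            rw [h1, h2] at this ⊢ <;> omega
      have hcard : (famSet S a b m).card + (famSet S a b m').card = n := by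
        have : famSet S a b m = (famSet S a b m')ᶜ := by
          ext j
          rw [Finset.mem_compl]
          exact hcompl j
        rw [this, Finset.card_compl, Fintype.card_fin]
        have h2 := Finset.card_le_univ (famSet S a b m')
        simp only [Finset.card_univ, Fintype.card_fin] at h2
        omega
      rw [card_famSet S a b haS hbS, card_famSet S a b haS hbS] at hcard
      have hk3 : 3 ≤ S.card := by omega
      obtain ⟨x, hx1, hx2⟩ := famSet_inter S a b haS hbS hk3 m m'
      exact (hcompl x).mp hx1 hx2
  · -- not all absolute values equal
    push_neg at habs
    obtain ⟨i, j₀, hij⟩ := habs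
    set S : Finset (Fin n) := Finset.univ.filter (fun x => |v x| = |v i|) with hS
    have hmemS : ∀ j, j ∈ S ↔ |v j| = |v i| := by
      intro j; simp [hS]
    have haS : i ∈ S := (hmemS i).mpr rfl
    have hbS : j₀ ∉ S := fun h => hij ((hmemS j₀).mp h).symm
    refine ⟨fun m => AddSubgroup.map (permAddHom n (famPerm S i j₀ m)) C, ?_, fun m => ⟨_, rfl⟩⟩
    intro m m' hmm
    simp only [hmap] at hmm
    have habs2 : ∀ j, |v ((famPerm S i j₀ m').symm j)| = |v ((famPerm S i j₀ m).symm j)| := by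
      intro j
      rcases gen_eq_of_zmultiples_eq (hcomp_ne _) hmm with h' | h' <;>
        have := congrFun h' j <;>
          simp only [Function.comp_apply, Pi.neg_apply] at this <;>
            rw [this] <;> simp [abs_neg]
    apply famSet_injective S i j₀ haS hbS
    ext j
    rw [mem_famSet S i j₀ haS hbS, mem_famSet S i j₀ haS hbS, hmemS, hmemS, habs2 j]
end
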